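/- Let x, y be nonnegative reals with x ≠ y and x + y ≤ 1. Then lim_{N→∞} ∑_{j=0}^{⌊N/2⌋} C(N,2j) C(2j,j) x^j y^j (1-x-y)^{N-2j} = 0. -/
import Mathlib


open Finset Filter

lemma choose_le_two_pow' (n k : ℕ) : n.choose k ≤ 2 ^ n := by
  rcases le_or_gt k n with h | h
  · calc n.choose k ≤ ∑ i ∈ Finset.range (n + 1), n.choose i :=
        Finset.single_le_sum (fun i _ => Nat.zero_le _)
          (Finset.mem_range.mpr (Nat.lt_succ_of_le h))
    _ = 2 ^ n := Nat.sum_range_choose n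
  · simp [Nat.choose_eq_zero_of_lt h]

/-- The tie probability vanishes: if `x ≠ y` are nonnegative with `x + y ≤ 1`, then
`∑_{j=0}^{⌊N/2⌋} C(N,2j) C(2j,j) x^j y^j (1-x-y)^{N-2j} → 0` as `N → ∞`. -/
theorem tie_probability_tendsto_zero (x y : ℝ) (hx : 0 ≤ x) (hy : 0 ≤ y) (hxy : x ≠ y)
    (hsum : x + y ≤ 1) :
    Tendsto (fun N : ℕ =>
        ∑ j ∈ Finset.range (N / 2 + 1),
          (N.choose (2 * j) : ℝ) * ((2 * j).choose j : ℝ) * x ^ j * y ^ j *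
            (1 - x - y) ^ (N - 2 * j))
      atTop (nhds 0) := by
  set q : ℝ := 1 - x - y with hq
  have hq0 : 0 ≤ q := by simp [hq]; linarith
  set a : ℝ := 2 * Real.sqrt (x * y) with ha
  have ha0 : 0 ≤ a := by positivity
  have hsq : Real.sqrt x ≠ Real.sqrt y := by
    intro h
    exact hxy (by
      have := congrArg (· ^ 2) h
      simpa [Real.sq_sqrt hx, Real.sq_sqrt hy] using this)
  have haxy : a < x + y := by
    have hd : Real.sqrt x - Real.sqrt y ≠ 0 := sub_ne_zero.mpr hsq
    have h : 0 < (Real.sqrt x - Real.sqrt y) ^ 2 :=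
      lt_of_le_of_ne (sq_nonneg _) (Ne.symm (pow_ne_zero 2 hd))
    have hmul : Real.sqrt (x * y) = Real.sqrt x * Real.sqrt y := Real.sqrt_mul hx y
    rw [ha, hmul]
    nlinarith [Real.sq_sqrt hx, Real.sq_sqrt hy, h]
  have ha2 : a ^ 2 = 4 * (x * y) := by
    rw [ha, mul_pow, Real.sq_sqrt (mul_nonneg hx hy)]; norm_num
  set c : ℝ := a + q with hc
  have hc0 : 0 ≤ c := by positivity
  have hc1 : c < 1 := by rw [hc, hq]; linarith
  have hbound : ∀ N : ℕ,
      (∑ j ∈ Finset.range (N / 2 + 1),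
        (N.choose (2 * j) : ℝ) * ((2 * j).choose j : ℝ) * x ^ j * y ^ j * q ^ (N - 2 * j))
      ≤ c ^ N := by
    intro N
    have step1 : (∑ j ∈ Finset.range (N / 2 + 1),
        (N.choose (2 * j) : ℝ) * ((2 * j).choose j : ℝ) * x ^ j * y ^ j * q ^ (N - 2 * j))
        ≤ ∑ j ∈ Finset.range (N / 2 + 1),
            (N.choose (2 * j) : ℝ) * a ^ (2 * j) * q ^ (N - 2 * j) := by
      apply Finset.sum_le_sum
      intro j _
      have h4 : ((2 * j).choose j : ℝ) ≤ 4 ^ j := by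
        have h := choose_le_two_pow' (2 * j) j
        calc ((2 * j).choose j : ℝ) ≤ (2 : ℝ) ^ (2 * j) := by exact_mod_cast h
          _ = 4 ^ j := by rw [pow_mul]; norm_num
      have ha2j : a ^ (2 * j) = 4 ^ j * x ^ j * y ^ j := by
        rw [pow_mul, ha2]; rw [mul_pow, mul_pow]; ring
      calc (N.choose (2 * j) : ℝ) * ((2 * j).choose j : ℝ) * x ^ j * y ^ j * q ^ (N - 2 * j)
          ≤ (N.choose (2 * j) : ℝ) * (4 : ℝ) ^ j * x ^ j * y ^ j * q ^ (N - 2 * j) := by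
            gcongr
        _ = (N.choose (2 * j) : ℝ) * a ^ (2 * j) * q ^ (N - 2 * j) := by
            rw [ha2j]; ring
    have step2 : (∑ j ∈ Finset.range (N / 2 + 1),
        (N.choose (2 * j) : ℝ) * a ^ (2 * j) * q ^ (N - 2 * j))
        ≤ ∑ k ∈ Finset.range (N + 1), (N.choose k : ℝ) * a ^ k * q ^ (N - k) := by
      rw [show (∑ j ∈ Finset.range (N / 2 + 1),
            (N.choose (2 * j) : ℝ) * a ^ (2 * j) * q ^ (N - 2 * j))
          = ∑ k ∈ (Finset.range (N / 2 + 1)).image (fun j => 2 * j),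
            (N.choose k : ℝ) * a ^ k * q ^ (N - k) from
        (Finset.sum_image (g := fun j => 2 * j)
          (f := fun k => (N.choose k : ℝ) * a ^ k * q ^ (N - k))
          (fun u _ v _ h => by simpa using h)).symm]
      apply Finset.sum_le_sum_of_subset_of_nonneg
      · intro k hk
        simp only [Finset.mem_image, Finset.mem_range] at hk ⊢
        obtain ⟨j, hj, rfl⟩ := hk
        omega
      · intro k _ _
        positivity
    have step3 : (∑ k ∈ Finset.range (N + 1), (N.choose k : ℝ) * a ^ k * q ^ (N - k))
        = c ^ N := by
      rw [hc, add_pow]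
      apply Finset.sum_congr rfl
      intro k _
      ring
    linarith
  have hnonneg : ∀ N : ℕ, 0 ≤ (∑ j ∈ Finset.range (N / 2 + 1),
      (N.choose (2 * j) : ℝ) * ((2 * j).choose j : ℝ) * x ^ j * y ^ j * q ^ (N - 2 * j)) := by
    intro N
    apply Finset.sum_nonneg
    intro j _
    positivity
  exact squeeze_zero hnonneg hbound (tendsto_pow_atTop_nhds_zero_of_lt_one hc0 hc1)
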